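/- Fix λ ∈ [0,1] and a policy μ, and define N_λ^μ Q := (I − γλP^μ)⁻¹(r + γ(1−λ) P(MQ)), where (MQ)(y) := max_a Q y a (so that N_λ^μ Q = N_λ^{μ,π_Q} Q for any policy π_Q greedy with respect to Q). Then for all Q, Q' : X → A → ℝ, N_λ^μ Q − N_λ^μ Q' = (1−λ)·(I − γλP^μ)⁻¹(TQ − TQ'), and consequently ‖N_λ^μ Q − N_λ^μ Q'‖∞ ≤ β·‖Q − Q'‖∞ with β := γ(1−λ)/(1−γλ); in particular N_λ^μ has a unique fixed point. -/

import Mathlib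

open scoped BigOperators

namespace RLPQL

variable {X A : Type*} [Fintype X] [Fintype A]

/-- `P` is a transition kernel: nonnegative and rows sum to one. -/
def IsKernel (P : X → A → X → ℝ) : Prop :=
  (∀ x a y, 0 ≤ P x a y) ∧ ∀ x a, ∑ y, P x a y = 1

/-- `π` is a (Markov) policy: nonnegative and sums to one over actions. -/
def IsPolicy (π : X → A → ℝ) : Prop :=
  (∀ x a, 0 ≤ π x a) ∧ ∀ x, ∑ a, π x a = 1

/-- `(πQ)(x) = ∑_a π x a * Q x a`. -/
def polQ (π Q : X → A → ℝ) : X → ℝ := fun x => ∑ a, π x a * Q x a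

/-- `(PV)(x,a) = ∑_y P x a y * V y`. -/
def PV (P : X → A → X → ℝ) (V : X → ℝ) : X → A → ℝ := fun x a => ∑ y, P x a y * V y

/-- `P^π Q = P (π Q)`. -/
def Ppol (P : X → A → X → ℝ) (π Q : X → A → ℝ) : X → A → ℝ := PV P (polQ π Q)

/-- Bellman operator `T^π Q = r + γ P^π Q`. -/
def bellman (P : X → A → X → ℝ) (r : X → A → ℝ) (γ : ℝ) (π Q : X → A → ℝ) : X → A → ℝ :=
  fun x a => r x a + γ * Ppol P π Q x a

/-- Bellman optimality operator `(T Q)(x,a) = r x a + γ ∑_y P x a y * max_b Q y b`. -/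
noncomputable def optBellman (P : X → A → X → ℝ) (r : X → A → ℝ) (γ : ℝ) (Q : X → A → ℝ) :
    X → A → ℝ :=
  fun x a => r x a + γ * ∑ y, P x a y * (⨆ b, Q y b)

/-- `π` is greedy with respect to `Q`. -/
def IsGreedy (π Q : X → A → ℝ) : Prop := ∀ x, polQ π Q x = ⨆ a, Q x a

/-- `(I - c P^μ)⁻¹ f = ∑_{t=0}^∞ c^t (P^μ)^t f`. -/
noncomputable def resolvent (P : X → A → X → ℝ) (c : ℝ) (μ : X → A → ℝ) (f : X → A → ℝ) :
    X → A → ℝ :=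
  fun x a => ∑' t : ℕ, c ^ t * ((Ppol P μ)^[t] f) x a

/-- Peng's Q(λ) operator `N_λ^{μ,π} Q = (I - γλ P^μ)⁻¹ (r + γ(1-λ) P^π Q)`. -/
noncomputable def peng (P : X → A → X → ℝ) (r : X → A → ℝ) (γ lam : ℝ) (μ π Q : X → A → ℝ) :
    X → A → ℝ :=
  resolvent P (γ * lam) μ (fun x a => r x a + γ * (1 - lam) * Ppol P π Q x a)

/-- The mixture policy `c·μ + (1-c)·π`. -/
def mixP (c : ℝ) (μ π : X → A → ℝ) : X → A → ℝ := fun x a => c * μ x a + (1 - c) * π x a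

end RLPQL

open RLPQL

namespace RLPQL
variable {X A : Type*} [Fintype X] [Fintype A]

/-- The operator `N_λ^μ Q := (I - γλ P^μ)⁻¹ (r + γ(1-λ) P (M Q))`, where `(MQ)(y) = max_a Q y a`. -/
noncomputable def pengGreedy (P : X → A → X → ℝ) (r : X → A → ℝ) (γ lam : ℝ) (μ : X → A → ℝ)
    (Q : X → A → ℝ) : X → A → ℝ :=
  resolvent P (γ * lam) μ (fun x a => r x a + γ * (1 - lam) * PV P (fun y => ⨆ b, Q y b) x a)

lemma weighted_abs_le {ι : Type*} [Fintype ι] (w v : ι → ℝ) (hw : ∀ i, 0 ≤ w i)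
    (hw1 : ∑ i, w i = 1) {C : ℝ} (hv : ∀ i, |v i| ≤ C) : |∑ i, w i * v i| ≤ C := by
  calc |∑ i, w i * v i| ≤ ∑ i, |w i * v i| := Finset.abs_sum_le_sum_abs _ _
    _ ≤ ∑ i, w i * C := by
        refine Finset.sum_le_sum fun i _ => ?_
        rw [abs_mul, abs_of_nonneg (hw i)]
        exact mul_le_mul_of_nonneg_left (hv i) (hw i)
    _ = C := by rw [← Finset.sum_mul, hw1, one_mul]

lemma ppol_sub (P : X → A → X → ℝ) (π : X → A → ℝ) (f g : X → A → ℝ) :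
    Ppol P π (f - g) = Ppol P π f - Ppol P π g := by
  funext x a
  simp [Ppol, PV, polQ, mul_sub, Finset.sum_sub_distrib]

lemma ppol_smul (P : X → A → X → ℝ) (π : X → A → ℝ) (k : ℝ) (f : X → A → ℝ) :
    Ppol P π (k • f) = k • Ppol P π f := by
  funext x a
  simp only [Ppol, PV, polQ, Pi.smul_apply, smul_eq_mul, Finset.mul_sum]
  refine Finset.sum_congr rfl fun y _ => ?_
  exact Finset.sum_congr rfl fun b _ => by ring

lemma ppol_iter_sub (P : X → A → X → ℝ) (π : X → A → ℝ) (f g : X → A → ℝ) (t : ℕ) :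
    (Ppol P π)^[t] (f - g) = (Ppol P π)^[t] f - (Ppol P π)^[t] g := by
  induction t with
  | zero => simp
  | succ n ih => simp [Function.iterate_succ_apply', ih, ppol_sub]

lemma ppol_iter_smul (P : X → A → X → ℝ) (π : X → A → ℝ) (k : ℝ) (f : X → A → ℝ) (t : ℕ) :
    (Ppol P π)^[t] (k • f) = k • (Ppol P π)^[t] f := by
  induction t with
  | zero => simp
  | succ n ih => simp [Function.iterate_succ_apply', ih, ppol_smul]

lemma ppol_abs_le (P : X → A → X → ℝ) (μ : X → A → ℝ) (hP : IsKernel P) (hμ : IsPolicy μ)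
    {f : X → A → ℝ} {C : ℝ} (hf : ∀ x a, |f x a| ≤ C) : ∀ x a, |Ppol P μ f x a| ≤ C := by
  intro x a
  exact weighted_abs_le _ _ (hP.1 x a) (hP.2 x a)
    (fun y => weighted_abs_le _ _ (hμ.1 y) (hμ.2 y) (fun b => hf y b))

lemma ppol_iter_abs_le (P : X → A → X → ℝ) (μ : X → A → ℝ) (hP : IsKernel P) (hμ : IsPolicy μ)
    {f : X → A → ℝ} {C : ℝ} (hf : ∀ x a, |f x a| ≤ C) (t : ℕ) :
    ∀ x a, |((Ppol P μ)^[t] f) x a| ≤ C := by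
  induction t with
  | zero => simpa using hf
  | succ n ih =>
      rw [Function.iterate_succ_apply']
      exact ppol_abs_le P μ hP hμ ih

lemma abs_le_norm (f : X → A → ℝ) (x : X) (a : A) : |f x a| ≤ ‖f‖ :=
  (Real.norm_eq_abs _ ▸ (norm_le_pi_norm (f x) a)).trans (norm_le_pi_norm f x)

lemma summable_res (P : X → A → X → ℝ) (μ : X → A → ℝ) (hP : IsKernel P) (hμ : IsPolicy μ)
    {c : ℝ} (hc0 : 0 ≤ c) (hc1 : c < 1) (f : X → A → ℝ) (x : X) (a : A) :
    Summable fun t : ℕ => c ^ t * ((Ppol P μ)^[t] f) x a := by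
  refine Summable.of_norm_bounded
    ((summable_geometric_of_lt_one hc0 hc1).mul_left ‖f‖) fun t => ?_
  rw [norm_mul, Real.norm_eq_abs, Real.norm_eq_abs, abs_pow, abs_of_nonneg hc0, mul_comm]
  exact mul_le_mul_of_nonneg_right
    (ppol_iter_abs_le P μ hP hμ (fun x a => abs_le_norm f x a) t x a) (pow_nonneg hc0 t)

lemma resolvent_sub (P : X → A → X → ℝ) (μ : X → A → ℝ) (hP : IsKernel P) (hμ : IsPolicy μ)
    {c : ℝ} (hc0 : 0 ≤ c) (hc1 : c < 1) (f g : X → A → ℝ) :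
    resolvent P c μ (f - g) = resolvent P c μ f - resolvent P c μ g := by
  funext x a
  simp only [resolvent, Pi.sub_apply]
  rw [← Summable.tsum_sub (summable_res P μ hP hμ hc0 hc1 f x a) (summable_res P μ hP hμ hc0 hc1 g x a)]
  refine tsum_congr fun t => ?_
  rw [ppol_iter_sub]
  simp [mul_sub]

lemma resolvent_smul (P : X → A → X → ℝ) (μ : X → A → ℝ) (c k : ℝ) (f : X → A → ℝ) :
    resolvent P c μ (k • f) = k • resolvent P c μ f := by
  funext x a
  simp only [resolvent, Pi.smul_apply, smul_eq_mul, ← tsum_mul_left]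
  refine tsum_congr fun t => ?_
  rw [ppol_iter_smul]
  simp; ring

lemma resolvent_abs_le (P : X → A → X → ℝ) (μ : X → A → ℝ) (hP : IsKernel P) (hμ : IsPolicy μ)
    {c : ℝ} (hc0 : 0 ≤ c) (hc1 : c < 1) (f : X → A → ℝ) (x : X) (a : A) :
    |resolvent P c μ f x a| ≤ ‖f‖ * (1 - c)⁻¹ := by
  have hsum : Summable fun t : ℕ => ‖c ^ t * ((Ppol P μ)^[t] f) x a‖ :=
    (summable_res P μ hP hμ hc0 hc1 f x a).abs
  calc |resolvent P c μ f x a| ≤ ∑' t : ℕ, ‖c ^ t * ((Ppol P μ)^[t] f) x a‖ := by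
        rw [← Real.norm_eq_abs]; exact norm_tsum_le_tsum_norm hsum
    _ ≤ ∑' t : ℕ, ‖f‖ * c ^ t := by
        refine Summable.tsum_le_tsum (fun t => ?_) hsum ((summable_geometric_of_lt_one hc0 hc1).mul_left _)
        rw [norm_mul, Real.norm_eq_abs, Real.norm_eq_abs, abs_pow, abs_of_nonneg hc0, mul_comm]
        exact mul_le_mul_of_nonneg_right
          (ppol_iter_abs_le P μ hP hμ (fun x a => abs_le_norm f x a) t x a) (pow_nonneg hc0 t)
    _ = ‖f‖ * (1 - c)⁻¹ := by rw [tsum_mul_left, tsum_geometric_of_lt_one hc0 hc1]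

lemma abs_ciSup_sub_ciSup {ι : Type*} [Fintype ι] [Nonempty ι] (v w : ι → ℝ) {C : ℝ}
    (h : ∀ i, |v i - w i| ≤ C) : |(⨆ i, v i) - ⨆ i, w i| ≤ C := by
  rw [abs_sub_le_iff]
  constructor
  · rw [sub_le_iff_le_add]
    refine ciSup_le fun i => ?_
    have := (abs_sub_le_iff.1 (h i)).1
    have h3 : w i ≤ ⨆ i, w i := le_ciSup (Set.Finite.bddAbove (Set.finite_range w)) i
    linarith
  · rw [sub_le_iff_le_add]
    refine ciSup_le fun i => ?_
    have := (abs_sub_le_iff.1 (h i)).2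
    have h3 : v i ≤ ⨆ i, v i := le_ciSup (Set.Finite.bddAbove (Set.finite_range v)) i
    linarith


end RLPQL

/-- `N_λ^μ Q - N_λ^μ Q' = (1-λ)(I - γλP^μ)⁻¹(TQ - TQ')`, hence
`‖N_λ^μ Q - N_λ^μ Q'‖∞ ≤ β ‖Q - Q'‖∞` with `β = γ(1-λ)/(1-γλ)`; in particular `N_λ^μ`
has a unique fixed point. -/
theorem pengGreedy_contraction {X A : Type*} [Fintype X] [Fintype A] [Nonempty X] [Nonempty A]
    (P : X → A → X → ℝ) (r : X → A → ℝ) (γ lam : ℝ)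
    (hP : IsKernel P) (hγ0 : 0 ≤ γ) (hγ1 : γ < 1) (hlam0 : 0 ≤ lam) (hlam1 : lam ≤ 1)
    (μ : X → A → ℝ) (hμ : IsPolicy μ) :
    (∀ Q Q' : X → A → ℝ,
        pengGreedy P r γ lam μ Q - pengGreedy P r γ lam μ Q'
          = fun x a => (1 - lam) *
              resolvent P (γ * lam) μ (optBellman P r γ Q - optBellman P r γ Q') x a) ∧
    (∀ Q Q' : X → A → ℝ,
        ‖pengGreedy P r γ lam μ Q - pengGreedy P r γ lam μ Q'‖
          ≤ (γ * (1 - lam) / (1 - γ * lam)) * ‖Q - Q'‖) ∧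
    (∃! Q : X → A → ℝ, pengGreedy P r γ lam μ Q = Q) := by
  have hc0 : 0 ≤ γ * lam := mul_nonneg hγ0 hlam0
  have hc1 : γ * lam < 1 := by nlinarith
  set β : ℝ := γ * (1 - lam) / (1 - γ * lam) with hβ
  have hd : 0 < 1 - γ * lam := by linarith
  have hβ0 : 0 ≤ β := div_nonneg (mul_nonneg hγ0 (by linarith)) hd.le
  have hβ1 : β < 1 := (div_lt_one hd).2 (by nlinarith)
  -- Statement 1
  have key : ∀ Q Q' : X → A → ℝ,
      pengGreedy P r γ lam μ Q - pengGreedy P r γ lam μ Q'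
        = fun x a => (1 - lam) *
            resolvent P (γ * lam) μ (optBellman P r γ Q - optBellman P r γ Q') x a := by
    intro Q Q'
    have hf : (fun x a => r x a + γ * (1 - lam) * PV P (fun y => ⨆ b, Q y b) x a)
        - (fun x a => r x a + γ * (1 - lam) * PV P (fun y => ⨆ b, Q' y b) x a)
        = (1 - lam) • (optBellman P r γ Q - optBellman P r γ Q') := by
      funext x a
      simp only [Pi.sub_apply, Pi.smul_apply, smul_eq_mul, optBellman, PV]
      ring
    have : pengGreedy P r γ lam μ Q - pengGreedy P r γ lam μ Q'
        = (1 - lam) • resolvent P (γ * lam) μ (optBellman P r γ Q - optBellman P r γ Q') := by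
      rw [pengGreedy, pengGreedy, ← resolvent_sub P μ hP hμ hc0 hc1, hf, resolvent_smul]
    rw [this]
    rfl
  -- Statement 2
  have bound : ∀ Q Q' : X → A → ℝ,
      ‖pengGreedy P r γ lam μ Q - pengGreedy P r γ lam μ Q'‖ ≤ β * ‖Q - Q'‖ := by
    intro Q Q'
    set g : X → A → ℝ := optBellman P r γ Q - optBellman P r γ Q' with hgdef
    have hg : ∀ x a, |g x a| ≤ γ * ‖Q - Q'‖ := by
      intro x a
      have h1 : g x a = γ * ∑ y, P x a y * ((⨆ b, Q y b) - ⨆ b, Q' y b) := by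
        simp only [hgdef, Pi.sub_apply, optBellman, mul_sub, Finset.sum_sub_distrib,
          Finset.mul_sum]
        ring
      rw [h1, abs_mul, abs_of_nonneg hγ0]
      refine mul_le_mul_of_nonneg_left ?_ hγ0
      refine weighted_abs_le _ _ (hP.1 x a) (hP.2 x a) fun y => ?_
      exact abs_ciSup_sub_ciSup _ _ fun b => by
        simpa using abs_le_norm (Q - Q') y b
    have hgnorm : ‖g‖ ≤ γ * ‖Q - Q'‖ := by
      refine (pi_norm_le_iff_of_nonneg (by positivity)).2 fun x => ?_
      refine (pi_norm_le_iff_of_nonneg (by positivity)).2 fun a => ?_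
      simpa [Real.norm_eq_abs] using hg x a
    rw [key]
    refine (pi_norm_le_iff_of_nonneg (by positivity)).2 fun x => ?_
    refine (pi_norm_le_iff_of_nonneg (by positivity)).2 fun a => ?_
    rw [Real.norm_eq_abs, abs_mul, abs_of_nonneg (by linarith : (0:ℝ) ≤ 1 - lam)]
    calc (1 - lam) * |resolvent P (γ * lam) μ g x a|
        ≤ (1 - lam) * (‖g‖ * (1 - γ * lam)⁻¹) :=
          mul_le_mul_of_nonneg_left (resolvent_abs_le P μ hP hμ hc0 hc1 g x a) (by linarith)
      _ ≤ (1 - lam) * ((γ * ‖Q - Q'‖) * (1 - γ * lam)⁻¹) := by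
          refine mul_le_mul_of_nonneg_left (mul_le_mul_of_nonneg_right hgnorm ?_) (by linarith)
          positivity
      _ = β * ‖Q - Q'‖ := by rw [hβ]; field_simp
  refine ⟨key, bound, ?_⟩
  -- Statement 3
  have hlip : LipschitzWith ⟨β, hβ0⟩ (pengGreedy P r γ lam μ) := by
    refine LipschitzWith.of_dist_le_mul fun Q Q' => ?_
    rw [dist_eq_norm, dist_eq_norm]
    exact bound Q Q'
  have hcontr : ContractingWith ⟨β, hβ0⟩ (pengGreedy P r γ lam μ) := by
    refine ⟨?_, hlip⟩
    refine NNReal.coe_lt_one.1 ?_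
    exact hβ1
  exact ⟨ContractingWith.fixedPoint (pengGreedy P r γ lam μ) hcontr,
    hcontr.fixedPoint_isFixedPt, fun Q hQ => hcontr.fixedPoint_unique hQ⟩
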